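/- Viewed as a polynomial in the parameter a (with coefficients in ℝ[x]), the elephant polynomial R_n has degree n − 1 in a, for every n ≥ 1. -/

import Mathlib

open Polynomial

lemma coeff_one_sub_X_sq_mul (p : Polynomial (Polynomial ℝ)) (i : ℕ) :
    ((1 - X ^ 2) * p).coeff i = p.coeff i - (if 2 ≤ i then p.coeff (i - 2) else 0) := by
  rw [sub_mul, one_mul, coeff_sub, mul_comm, coeff_mul_X_pow']

/-- The elephant polynomials as elements of `(ℝ[a])[x]`: the outer variable is `x`,
the inner variable is the parameter `a` (so `a` is `C X`), and the factor `a/n`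
is the inner polynomial `(1/n) * X`. -/
noncomputable def elephantR2 : ℕ → Polynomial (Polynomial ℝ)
  | 0 => 1
  | 1 => X
  | n + 2 => X * elephantR2 (n + 1) -
      C (Polynomial.C (((n : ℝ) + 1))⁻¹ * Polynomial.X) *
        ((1 - X ^ 2) * (elephantR2 (n + 1)).derivative)

lemma elephant_key : ∀ m : ℕ,
    (∀ i, ((elephantR2 (m + 1)).coeff i).degree ≤ (m : ℕ)) ∧
    (∀ i, m + 1 < i → (elephantR2 (m + 1)).coeff i = 0) ∧
    ((elephantR2 (m + 1)).coeff (m + 1)).coeff m = 1 := by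
  intro m
  induction m with
  | zero =>
    refine ⟨?_, ?_, ?_⟩
    · intro i
      simp only [elephantR2, coeff_X]
      split <;> simp
    · intro i hi
      simp only [elephantR2, coeff_X]
      rw [if_neg (by omega)]
    · norm_num [elephantR2]
  | succ m ih =>
    obtain ⟨hdeg, hvan, hlead⟩ := ih
    set P := elephantR2 (m + 1) with hP
    set q : Polynomial ℝ := Polynomial.C (((m : ℝ) + 1))⁻¹ * Polynomial.X with hq
    have heq : elephantR2 (m + 2) = X * P - C q * ((1 - X ^ 2) * P.derivative) := rfl
    have hcoeff : ∀ i, (elephantR2 (m + 2)).coeff i =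
        (X * P).coeff i -
          q * ((P.derivative).coeff i - (if 2 ≤ i then (P.derivative).coeff (i - 2) else 0)) := by
      intro i
      rw [heq, coeff_sub, coeff_C_mul, coeff_one_sub_X_sq_mul]
    have hqdeg : q.degree ≤ 1 := by
      calc q.degree ≤ (Polynomial.C (((m : ℝ) + 1))⁻¹).degree + Polynomial.X.degree :=
            degree_mul_le _ _
        _ ≤ 0 + 1 := add_le_add degree_C_le degree_X_le
        _ = 1 := by norm_num
    have hderdeg : ∀ i, ((P.derivative).coeff i).degree ≤ (m : ℕ) := by
      intro i
      rw [coeff_derivative]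
      calc (P.coeff (i + 1) * (i + 1 : Polynomial ℝ)).degree
          ≤ (P.coeff (i + 1)).degree + ((i : Polynomial ℝ) + 1).degree := degree_mul_le _ _
        _ ≤ (m : ℕ) + 0 := add_le_add (hdeg _) (by exact_mod_cast degree_natCast_le (i + 1))
        _ ≤ (m : ℕ) := by norm_num
    have hXP : ∀ i, ((X * P).coeff i).degree ≤ ((m : ℕ) : WithBot ℕ) := by
      intro i
      cases i with
      | zero => rw [mul_coeff_zero]; simp
      | succ j => rw [coeff_X_mul]; exact hdeg j
    refine ⟨?_, ?_, ?_⟩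
    · intro i
      rw [hcoeff i]
      have hB : ((P.derivative).coeff i -
          (if 2 ≤ i then (P.derivative).coeff (i - 2) else 0)).degree ≤ (m : ℕ) := by
        refine le_trans (degree_sub_le _ _) (max_le (hderdeg i) ?_)
        split
        · exact hderdeg _
        · simp
      have T : ((X * P).coeff i - q * ((P.derivative).coeff i - (if 2 ≤ i then (P.derivative).coeff (i - 2) else 0))).degree ≤ max ((X * P).coeff i).degree (q * ((P.derivative).coeff i - (if 2 ≤ i then (P.derivative).coeff (i - 2) else 0))).degree := degree_sub_le _ _
      have U : max ((X * P).coeff i).degree (q * ((P.derivative).coeff i - (if 2 ≤ i then (P.derivative).coeff (i - 2) else 0))).degree ≤ ((m + 1 : ℕ) : WithBot ℕ) := by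
            refine max_le (le_trans (hXP i) ?_) (le_trans (degree_mul_le _ _) ?_)
            · exact_mod_cast WithBot.coe_le_coe.mpr (Nat.le_succ m)
            · calc q.degree + _ ≤ 1 + (m : ℕ) := add_le_add hqdeg hB
                _ = ((m + 1 : ℕ) : WithBot ℕ) := by push_cast; ring
      exact T.trans U
    · intro i hi
      rw [hcoeff i]
      have h1 : (X * P).coeff i = 0 := by
        cases i with
        | zero => omega
        | succ j => rw [coeff_X_mul]; exact hvan j (by omega)
      have h2 : (P.derivative).coeff i = 0 := by
        rw [coeff_derivative, hvan (i + 1) (by omega), zero_mul]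
      have h3 : (if 2 ≤ i then (P.derivative).coeff (i - 2) else 0) = 0 := by
        rw [if_pos (by omega), coeff_derivative, hvan (i - 2 + 1) (by omega), zero_mul]
      rw [h1, h2, h3, sub_zero, mul_zero, sub_zero]
    · rw [hcoeff (m + 2)]
      have h1 : (X * P).coeff (m + 2) = P.coeff (m + 1) := coeff_X_mul _ _
      have h2 : (P.derivative).coeff (m + 2) = 0 := by
        rw [coeff_derivative, hvan (m + 3) (by omega), zero_mul]
      have h3 : (if 2 ≤ m + 2 then (P.derivative).coeff (m + 2 - 2) else 0) =
          P.coeff (m + 1) * ((m : Polynomial ℝ) + 1) := by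
        rw [if_pos (by omega)]
        show (P.derivative).coeff m = _
        rw [coeff_derivative]
      rw [h1, h2, h3, zero_sub, mul_neg, sub_neg_eq_add]
      have h4 : q * (P.coeff (m + 1) * ((m : Polynomial ℝ) + 1)) = Polynomial.X * P.coeff (m + 1) := by
        rw [hq]
        have : ((m : Polynomial ℝ) + 1) = Polynomial.C ((m : ℝ) + 1) := by
          rw [map_add, map_one, Polynomial.C_eq_natCast]
        rw [this]
        rw [mul_comm (Polynomial.C (((m : ℝ) + 1))⁻¹) Polynomial.X, mul_assoc, mul_comm (P.coeff (m+1)) _,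
          ← mul_assoc (Polynomial.C (((m : ℝ) + 1))⁻¹), ← Polynomial.C_mul,
          inv_mul_cancel₀ (by positivity : ((m : ℝ) + 1) ≠ 0)]
        simp [mul_comm]
      rw [h4, coeff_add]
      have h5 : (P.coeff (m + 1)).coeff (m + 1) = 0 :=
        coeff_eq_zero_of_degree_lt (lt_of_le_of_lt (hdeg _) (by exact_mod_cast Nat.lt_succ_self m))
      rw [Polynomial.coeff_X_mul, hlead, h5, zero_add]

theorem stmt_12 (n : ℕ) (hn : 1 ≤ n) :
    (∀ i : ℕ, ((elephantR2 n).coeff i).degree ≤ (n - 1 : ℕ)) ∧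
    (∃ i : ℕ, ((elephantR2 n).coeff i).degree = (n - 1 : ℕ)) := by
  obtain ⟨m, rfl⟩ := Nat.exists_eq_add_of_le hn
  obtain ⟨hdeg, _, hlead⟩ := elephant_key m
  have hm : 1 + m - 1 = m := by omega
  rw [hm]
  have e : elephantR2 (1 + m) = elephantR2 (m + 1) := by rw [Nat.add_comm]
  rw [e]
  refine ⟨hdeg, ⟨m + 1, le_antisymm (hdeg _) ?_⟩⟩
  exact le_degree_of_ne_zero (by rw [hlead]; norm_num)
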